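/- arXiv:2602.21767 — 2 statements merged into one kernel-verified Lean document; each statement's English description precedes it below -/
import Mathlib

section
/- Under the assumptions of the quadratic-form construction, if additionally Λ^T P + P Λ ≤ -I (negative definite with margin), P is positive definite, and the map Φ(x) = (φ_1(x),...,φ_d(x)) is nonzero for x ≠ 0, then V(x) = Φ(x)^T P Φ(x) satisfies V(x) > 0 for x ≠ 0 and ∇V(x)·f(x) ≤ -‖Φ(x)‖² < 0 for x ≠ 0. -/
open Matrix

/-- If P is positive definite, ΛᵀP + PΛ ≤ -I in the Loewner order, and the
eigenfunction map Φ vanishes only at the origin, then V = ΦᵀPΦ is a strict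
Lyapunov function: V(x) > 0 and ∇V(x)·f(x) ≤ -‖Φ(x)‖² < 0 for x ≠ 0. -/
theorem lyapunov_quadratic_form_strict
    {d : ℕ} (f : EuclideanSpace ℝ (Fin d) → EuclideanSpace ℝ (Fin d))
    (hf : ContDiff ℝ 1 f)
    (φ : Fin d → EuclideanSpace ℝ (Fin d) → ℝ)
    (hφ : ∀ i, ContDiff ℝ 1 (φ i))
    (lam : Fin d → ℝ)
    (heig : ∀ i x, fderiv ℝ (φ i) x (f x) = lam i * φ i x)
    (P : Matrix (Fin d) (Fin d) ℝ) (hP : P.IsSymm) (hPpos : P.PosDef)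
    (hneg : (-(1 : Matrix (Fin d) (Fin d) ℝ)
        - ((Matrix.diagonal lam)ᵀ * P + P * Matrix.diagonal lam)).PosSemidef)
    (hΦ : ∀ x, x ≠ 0 → (fun i => φ i x) ≠ 0)
    (V : EuclideanSpace ℝ (Fin d) → ℝ)
    (hV : V = fun x => ∑ i, ∑ j, P i j * φ i x * φ j x) :
    ∀ x, x ≠ 0 →
      0 < V x ∧
      fderiv ℝ V x (f x) ≤ -(∑ i, (φ i x) ^ 2) ∧
      -(∑ i, (φ i x) ^ 2) < 0 := by
  intro x hx
  set u : Fin d → ℝ := fun i => φ i x with hu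
  have hune : u ≠ 0 := hΦ x hx
  have hdi : ∀ i, DifferentiableAt ℝ (φ i) x :=
    fun i => ((hφ i).differentiable one_ne_zero).differentiableAt
  -- positivity of V
  have hpos : 0 < V x := by
    have h := hPpos.dotProduct_mulVec_pos hune
    simp only [star_trivial] at h
    rw [hV]
    simp only [dotProduct, Matrix.mulVec, dotProduct] at h
    calc (0:ℝ) < ∑ i, u i * ∑ j, P i j * u j := h
      _ = ∑ i, ∑ j, P i j * φ i x * φ j x := by
          rw [Finset.sum_congr rfl]
          intro i _
          rw [Finset.mul_sum, Finset.sum_congr rfl]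
          intro j _
          ring
  -- derivative computation
  have hterm : ∀ i j : Fin d, HasFDerivAt (fun y => P i j * φ i y * φ j y)
      (P i j • (φ i x • fderiv ℝ (φ j) x + φ j x • fderiv ℝ (φ i) x)) x := by
    intro i j
    have h1 : HasFDerivAt (fun y => φ i y * φ j y)
        (φ i x • fderiv ℝ (φ j) x + φ j x • fderiv ℝ (φ i) x) x :=
      (hdi i).hasFDerivAt.mul (hdi j).hasFDerivAt
    have h2 := h1.const_mul (P i j)
    simpa only [mul_assoc] using h2
  have hsum : HasFDerivAt V
      (∑ i, ∑ j, P i j • (φ i x • fderiv ℝ (φ j) x + φ j x • fderiv ℝ (φ i) x)) x := by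
    rw [hV]
    exact HasFDerivAt.fun_sum (fun i _ => HasFDerivAt.fun_sum (fun j _ => hterm i j))
  have hfd : fderiv ℝ V x (f x)
      = ∑ i, ∑ j, P i j * (φ i x * (lam j * φ j x) + φ j x * (lam i * φ i x)) := by
    rw [hsum.fderiv]
    simp only [ContinuousLinearMap.sum_apply, ContinuousLinearMap.smul_apply,
      ContinuousLinearMap.add_apply, smul_eq_mul, heig]
  -- matrix inequality
  have hkey := hneg.dotProduct_mulVec_nonneg u
  simp only [star_trivial, Matrix.sub_mulVec, Matrix.add_mulVec, Matrix.neg_mulVec,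
    Matrix.one_mulVec, dotProduct_sub, dotProduct_add, dotProduct_neg] at hkey
  have hMeq : u ⬝ᵥ ((Matrix.diagonal lam)ᵀ * P) *ᵥ u + u ⬝ᵥ (P * Matrix.diagonal lam) *ᵥ u
      = ∑ i, ∑ j, P i j * (φ i x * (lam j * φ j x) + φ j x * (lam i * φ i x)) := by
    simp only [dotProduct, Matrix.mulVec, dotProduct, Matrix.diagonal_transpose,
      Matrix.diagonal_mul, Matrix.mul_diagonal]
    rw [← Finset.sum_add_distrib]
    rw [Finset.sum_congr rfl]
    intro i _
    rw [Finset.mul_sum, Finset.mul_sum, ← Finset.sum_add_distrib,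
      Finset.sum_congr rfl]
    intro j _
    ring
  have huu : u ⬝ᵥ u = ∑ i, (φ i x) ^ 2 := by
    simp only [dotProduct, hu]
    exact Finset.sum_congr rfl fun i _ => (sq (φ i x)).symm
  have hpossum : 0 < ∑ i, (φ i x) ^ 2 := by
    rw [← huu]
    have := hPpos.posSemidef -- unused; just ensure ok
    have : 0 < u ⬝ᵥ u := by
      rcases Function.ne_iff.mp hune with ⟨i, hi⟩
      have hle : ∀ j ∈ Finset.univ, (0:ℝ) ≤ u j * u j := fun j _ => mul_self_nonneg _
      calc (0:ℝ) < u i * u i := mul_self_pos.mpr hi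
        _ ≤ ∑ j, u j * u j := Finset.single_le_sum hle (Finset.mem_univ i)
        _ = u ⬝ᵥ u := rfl
    exact this
  refine ⟨hpos, ?_, by linarith⟩
  rw [hfd, ← hMeq]
  have := hkey
  -- hkey : 0 ≤ -(u ⬝ᵥ u) - (A + B)
  have hdiag : (Matrix.diagonal lam)ᵀ = Matrix.diagonal lam := Matrix.diagonal_transpose lam
  rw [huu] at hkey
  linarith [hkey]
end

section
/- Let h be C^1 on the basin of attraction satisfying ∇h(x)·f(x) = λh(x) - w^T G(x) along trajectories, with λ < 0, h(0)=0, and suppose e^{-λt} w^T G(s_t(x)) is integrable in t over [0,∞) and e^{-λt} h(s_t(x)) → 0 as t → ∞. Then h admits the representation h(x) = ∫_0^∞ e^{-λ t} w^T G(s_t(x)) dt. -/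
open MeasureTheory Filter Topology
open scoped RealInnerProductSpace

/-- Path-integral representation of the nonlinear part of a Koopman eigenfunction:
if ∇h·f = λh - wᵀG, h(0) = 0, the integrand is integrable and
e^{-λt} h(s_t(x)) → 0, then h(x) = ∫₀^∞ e^{-λt} wᵀG(s_t(x)) dt. -/
theorem path_integral_representation
    {d : ℕ} (f : EuclideanSpace ℝ (Fin d) → EuclideanSpace ℝ (Fin d))
    (hf : ContDiff ℝ 1 f) (hf0 : f 0 = 0)
    (s : ℝ → EuclideanSpace ℝ (Fin d) → EuclideanSpace ℝ (Fin d))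
    (hs0 : ∀ x, s 0 x = x)
    (hflow : ∀ x, ∀ t : ℝ, HasDerivAt (fun τ => s τ x) (f (s t x)) t)
    (hattr : ∀ x, Tendsto (fun t => s t x) atTop (𝓝 0))
    (G : EuclideanSpace ℝ (Fin d) → EuclideanSpace ℝ (Fin d))
    (hG : G = fun x => f x - fderiv ℝ f 0 x)
    (w : EuclideanSpace ℝ (Fin d)) (lam : ℝ) (hlam : lam < 0)
    (h : EuclideanSpace ℝ (Fin d) → ℝ) (hh : ContDiff ℝ 1 h) (hh0 : h 0 = 0)
    (hpde : ∀ x, fderiv ℝ h x (f x) = lam * h x - ⟪w, G x⟫)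
    (x : EuclideanSpace ℝ (Fin d))
    (hint : IntegrableOn (fun t : ℝ => Real.exp (-lam * t) * ⟪w, G (s t x)⟫)
        (Set.Ioi (0:ℝ)))
    (hlim : Tendsto (fun t : ℝ => Real.exp (-lam * t) * h (s t x)) atTop (𝓝 0)) :
    h x = ∫ t in Set.Ioi (0:ℝ), Real.exp (-lam * t) * ⟪w, G (s t x)⟫ := by
  set F : ℝ → ℝ := fun t => Real.exp (-lam * t) * h (s t x) with hF
  have hderiv : ∀ t : ℝ, t ∈ Set.Ici (0:ℝ) →
      HasDerivAt F (-(Real.exp (-lam * t) * ⟪w, G (s t x)⟫)) t := by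
    intro t _
    have h1 : HasDerivAt (fun τ : ℝ => Real.exp (-lam * τ))
        (Real.exp (-lam * t) * (-lam)) t := by
      have hid : HasDerivAt (fun τ : ℝ => -lam * τ) (-lam) t := by
        simpa using (hasDerivAt_id t).const_mul (-lam)
      exact hid.exp
    have h2 : HasDerivAt (fun τ => h (s τ x)) (fderiv ℝ h (s t x) (f (s t x))) t :=
      ((hh.differentiable one_ne_zero (s t x)).hasFDerivAt).comp_hasDerivAt t (hflow x t)
    have : HasDerivAt F _ t := h1.mul h2
    convert this using 1
    rw [hpde]
    ring
  have key := integral_Ioi_of_hasDerivAt_of_tendsto' hderiv hint.neg hlim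
  have hF0 : F 0 = h x := by simp [hF, hs0]
  have : (∫ t in Set.Ioi (0:ℝ), -(Real.exp (-lam * t) * ⟪w, G (s t x)⟫)) = -(h x) := by
    rw [key, hF0]; ring
  rw [integral_neg] at this
  linarith
end
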